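/- Let T be an infinite, locally finite, subperiodic rooted tree with only finitely many infinite rays from the root. Then T has linear growth: there is a constant c such that the ball of radius n around the root in T has at most c·n + c vertices for all n. -/

import Mathlib

/-- `f` is an infinite (injective) ray. -/
def IsRay {V : Type*} (G : SimpleGraph V) (f : ℕ → V) : Prop :=
  Function.Injective f ∧ ∀ n, G.Adj (f n) (f (n + 1))

/-- The descendants of `x` in the tree `T` rooted at `o`: vertices `y` such that `x`
lies on the (unique) path from `o` to `y`. -/
def Descendants {V : Type*} (T : SimpleGraph V) (o x : V) : Set V :=
  {y | T.dist o y = T.dist o x + T.dist x y}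

/-- The rooted tree `T` (root `o`) is subperiodic: for every vertex `x` there is an
injective graph homomorphism of the subtree of descendants of `x` into `T` sending `x`
to `o`. -/
def Subperiodic {V : Type*} (T : SimpleGraph V) (o : V) : Prop :=
  ∀ x : V, ∃ f : V → V, f x = o ∧ Set.InjOn f (Descendants T o x) ∧
    ∀ u ∈ Descendants T o x, ∀ v ∈ Descendants T o x, T.Adj u v → T.Adj (f u) (f v)

namespace Stmt9Aux

open SimpleGraph Walk

variable {V : Type*} {T : SimpleGraph V} {o : V}

lemma path_len (hconn : T.Connected) (hac : T.IsAcyclic) {u v : V} (p : T.Walk u v)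
    (hp : p.IsPath) : p.length = T.dist u v := by
  obtain ⟨q, hq, hql⟩ := hconn.exists_path_of_dist u v
  have h := hac.path_unique ⟨p, hp⟩ ⟨q, hq⟩
  rw [show p = q from congrArg Subtype.val h]
  exact hql

lemma dist_split (hconn : T.Connected) (hac : T.IsAcyclic) {u v w : V} (p : T.Walk u v)
    (hp : p.IsPath) (hw : w ∈ p.support) :
    T.dist u w + T.dist w v = T.dist u v := by
  classical
  have h1 := path_len hconn hac _ (hp.takeUntil hw)
  have h2 := path_len hconn hac _ (hp.dropUntil hw)
  have h3 : (p.takeUntil w hw).length + (p.dropUntil w hw).length = p.length := by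
    rw [← Walk.length_append, Walk.take_spec]
  have h4 := path_len hconn hac p hp
  omega

lemma exists_path_through (hconn : T.Connected) {u v w : V}
    (h : T.dist u w + T.dist w v = T.dist u v) :
    ∃ p : T.Walk u v, p.IsPath ∧ w ∈ p.support ∧ p.length = T.dist u v := by
  obtain ⟨p1, hp1⟩ := hconn.exists_walk_length_eq_dist u w
  obtain ⟨p2, hp2⟩ := hconn.exists_walk_length_eq_dist w v
  have hlen : (p1.append p2).length = T.dist u v := by
    rw [Walk.length_append]; omega
  exact ⟨p1.append p2, (p1.append p2).isPath_of_length_eq_dist hlen,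
    (Walk.mem_support_append_iff _ _).2 (Or.inl p1.end_mem_support), hlen⟩

lemma desc_self (x : V) : x ∈ Descendants T o x := by
  simp [Descendants, SimpleGraph.dist_self]

lemma mem_desc {x y : V} : y ∈ Descendants T o x ↔ T.dist o y = T.dist o x + T.dist x y :=
  Iff.rfl

lemma desc_trans (hconn : T.Connected) {x z y : V} (hz : z ∈ Descendants T o x)
    (hy : y ∈ Descendants T o z) :
    y ∈ Descendants T o x ∧ T.dist x y = T.dist x z + T.dist z y := by
  rw [mem_desc] at *
  have t1 := hconn.dist_triangle (u := x) (v := z) (w := y)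
  have t2 := hconn.dist_triangle (u := o) (v := x) (w := y)
  constructor <;> omega

lemma chain_in_desc (hconn : T.Connected) {x v w : V} (hv : v ∈ Descendants T o x)
    (hw : T.dist x w + T.dist w v = T.dist x v) : w ∈ Descendants T o x := by
  rw [mem_desc] at *
  have t1 := hconn.dist_triangle (u := o) (v := x) (w := w)
  have t2 := hconn.dist_triangle (u := o) (v := w) (w := v)
  omega

lemma anc_compare (hconn : T.Connected) (hac : T.IsAcyclic) {v z w : V}
    (hz : v ∈ Descendants T o z) (hw : v ∈ Descendants T o w)
    (hle : T.dist o z ≤ T.dist o w) : w ∈ Descendants T o z := by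
  classical
  rw [mem_desc] at hz hw
  obtain ⟨p, hp, hzp, hplen⟩ := exists_path_through hconn (w := z) hz.symm
  obtain ⟨p', hp', hwp', _⟩ := exists_path_through hconn (w := w) hw.symm
  have hpq := hac.path_unique ⟨p, hp⟩ ⟨p', hp'⟩
  have hwp : w ∈ p.support := by rw [show p = p' from congrArg Subtype.val hpq]; exact hwp'
  rw [← Walk.take_spec p hzp, Walk.mem_support_append_iff] at hwp
  rcases hwp with hwp | hwp
  · have := dist_split hconn hac _ (hp.takeUntil hzp) hwp
    have hwz : T.dist w z = 0 := by omega
    have : w = z := (hconn w z).dist_eq_zero_iff.1 hwz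
    subst this
    exact desc_self w
  · have := dist_split hconn hac _ (hp.dropUntil hzp) hwp
    rw [mem_desc]
    omega

lemma anc_unique (hconn : T.Connected) (hac : T.IsAcyclic) {v z w : V}
    (hz : v ∈ Descendants T o z) (hw : v ∈ Descendants T o w)
    (heq : T.dist o z = T.dist o w) : z = w := by
  have h := anc_compare hconn hac hz hw heq.le
  rw [mem_desc] at h
  have : T.dist z w = 0 := by omega
  exact ((hconn z w).dist_eq_zero_iff.1 this)

lemma getVert_dist_le (hconn : T.Connected) {u v : V} (p : T.Walk u v) :
    ∀ k, T.dist u (p.getVert k) ≤ k := by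
  intro k
  induction k with
  | zero => simp [Walk.getVert_zero, SimpleGraph.dist_self]
  | succ k ih =>
    by_cases h : k < p.length
    · have hadj := p.adj_getVert_succ h
      have h1 : T.dist (p.getVert k) (p.getVert (k + 1)) = 1 := dist_eq_one_iff_adj.2 hadj
      have h2 := hconn.dist_triangle (u := u) (v := p.getVert k) (w := p.getVert (k + 1))
      omega
    · rw [p.getVert_of_length_le (by omega), ← p.getVert_of_length_le (le_of_not_gt h)]
      omega

lemma geodesic_getVert (hconn : T.Connected) {u v : V} (p : T.Walk u v)
    (hlen : p.length = T.dist u v) {k : ℕ} (hk : k ≤ p.length) :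
    T.dist u (p.getVert k) = k ∧ T.dist (p.getVert k) v = p.length - k := by
  have h1 := getVert_dist_le hconn p k
  have h2 : T.dist (p.getVert k) v ≤ p.length - k := by
    have h3 := getVert_dist_le hconn p.reverse (p.length - k)
    have h4 : p.reverse.getVert (p.length - k) = p.getVert k := by
      rw [Walk.getVert_reverse]
      congr 1
      omega
    rw [h4] at h3
    rw [SimpleGraph.dist_comm]
    exact h3
  have h5 := hconn.dist_triangle (u := u) (v := p.getVert k) (w := v)
  omega

lemma child_exists (hconn : T.Connected) (hac : T.IsAcyclic) {x v : V}
    (hv : v ∈ Descendants T o x) (hne : v ≠ x) :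
    ∃ c, T.Adj x c ∧ T.dist o c = T.dist o x + 1 ∧ c ∈ Descendants T o x ∧
      v ∈ Descendants T o c := by
  have hd : 0 < T.dist x v := (hconn x v).pos_dist_of_ne (Ne.symm hne)
  obtain ⟨p, hp, hplen⟩ := hconn.exists_path_of_dist x v
  have hlen1 : 1 ≤ p.length := by omega
  have hadj : T.Adj x (p.getVert 1) := by
    have := p.adj_getVert_succ (i := 0) (by omega)
    rwa [Walk.getVert_zero] at this
  obtain ⟨hd1, hd2⟩ := geodesic_getVert hconn p hplen hlen1
  have hcx : p.getVert 1 ∈ Descendants T o x := chain_in_desc hconn hv (by omega)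
  refine ⟨p.getVert 1, hadj, ?_, hcx, ?_⟩
  · rw [mem_desc] at hcx; omega
  · rw [mem_desc] at hv hcx ⊢
    omega

lemma map_walk {x : V} {φ : V → V}
    (hom : ∀ u ∈ Descendants T o x, ∀ v ∈ Descendants T o x, T.Adj u v → T.Adj (φ u) (φ v)) :
    ∀ {a b : V} (p : T.Walk a b), (∀ w ∈ p.support, w ∈ Descendants T o x) →
      ∃ q : T.Walk (φ a) (φ b), q.length = p.length ∧ q.support = p.support.map φ := by
  intro a b p
  induction p with
  | nil => exact fun _ => ⟨Walk.nil, by simp, by simp⟩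
  | cons h p ih =>
    intro hsup
    obtain ⟨q, hql, hqs⟩ := ih (fun w hw => hsup w (by simp [hw]))
    refine ⟨Walk.cons (hom _ (hsup _ (by simp)) _ (hsup _ (by simp)) h) q, by simp [hql], ?_⟩
    simp [Walk.support_cons, hqs]

lemma sup_in_desc (hconn : T.Connected) (hac : T.IsAcyclic) {x v : V}
    (hv : v ∈ Descendants T o x) {p : T.Walk x v} (hp : p.IsPath) :
    ∀ w ∈ p.support, w ∈ Descendants T o x := by
  intro w hw
  exact chain_in_desc hconn hv (dist_split hconn hac p hp hw)

lemma phi_path (hconn : T.Connected) (hac : T.IsAcyclic) {x v : V} {φ : V → V}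
    (hinj : Set.InjOn φ (Descendants T o x))
    (hom : ∀ u ∈ Descendants T o x, ∀ v ∈ Descendants T o x, T.Adj u v → T.Adj (φ u) (φ v))
    (hv : v ∈ Descendants T o x) {p : T.Walk x v} (hp : p.IsPath) :
    ∃ q : T.Walk (φ x) (φ v), q.IsPath ∧ q.length = p.length ∧ q.support = p.support.map φ := by
  have hsup := sup_in_desc hconn hac hv hp
  obtain ⟨q, hql, hqs⟩ := map_walk hom p hsup
  refine ⟨q, ?_, hql, hqs⟩
  rw [Walk.isPath_def, hqs]
  exact ((Walk.isPath_def _).1 hp).map_on (fun a ha b hb hab => hinj (hsup a ha) (hsup b hb) hab)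

lemma phi_dist (hconn : T.Connected) (hac : T.IsAcyclic) {x v : V} {φ : V → V}
    (hphix : φ x = o) (hinj : Set.InjOn φ (Descendants T o x))
    (hom : ∀ u ∈ Descendants T o x, ∀ v ∈ Descendants T o x, T.Adj u v → T.Adj (φ u) (φ v))
    (hv : v ∈ Descendants T o x) : T.dist o (φ v) = T.dist x v := by
  obtain ⟨p, hp, hplen⟩ := hconn.exists_path_of_dist x v
  obtain ⟨q, hq, hql, _⟩ := phi_path hconn hac hinj hom hv hp
  have := path_len hconn hac q hq
  rw [← hphix]
  omega

lemma phi_desc (hconn : T.Connected) (hac : T.IsAcyclic) {x u v : V} {φ : V → V}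
    (hphix : φ x = o) (hinj : Set.InjOn φ (Descendants T o x))
    (hom : ∀ u ∈ Descendants T o x, ∀ v ∈ Descendants T o x, T.Adj u v → T.Adj (φ u) (φ v))
    (hu : u ∈ Descendants T o x) (hv : v ∈ Descendants T o u) :
    φ v ∈ Descendants T o (φ u) := by
  obtain ⟨hvx, hsum⟩ := desc_trans hconn hu hv
  obtain ⟨p, hp, hup, hplen⟩ := exists_path_through hconn (w := u) hsum.symm
  obtain ⟨q, hq, hql, hqs⟩ := phi_path hconn hac hinj hom hvx hp
  have huq : φ u ∈ q.support := by
    rw [hqs]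
    exact List.mem_map_of_mem hup
  have := dist_split hconn hac q hq huq
  rw [mem_desc]
  rw [hphix] at this
  omega

/-- Walk along a ray. -/
def rayWalk {f : ℕ → V} (hadj : ∀ n, T.Adj (f n) (f (n + 1))) : ∀ n, T.Walk (f 0) (f n)
  | 0 => Walk.nil
  | n + 1 => (rayWalk hadj n).concat (hadj n)

lemma rayWalk_length {f : ℕ → V} (hadj : ∀ n, T.Adj (f n) (f (n + 1))) (n : ℕ) :
    (rayWalk (T := T) hadj n).length = n := by
  induction n with
  | zero => rfl
  | succ n ih => rw [rayWalk, Walk.length_concat, ih]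

lemma rayWalk_support {f : ℕ → V} (hadj : ∀ n, T.Adj (f n) (f (n + 1))) (n : ℕ) :
    (rayWalk (T := T) hadj n).support = (List.range (n + 1)).map f := by
  induction n with
  | zero => simp [rayWalk, List.range_succ]
  | succ n ih =>
    rw [rayWalk, Walk.support_concat, ih, List.range_succ (n := n + 1), List.map_append]
    simp

lemma ray_dist0 (hconn : T.Connected) (hac : T.IsAcyclic) {f : ℕ → V}
    (hf : IsRay T f) (n : ℕ) : T.dist (f 0) (f n) = n := by
  have hp : (rayWalk (T := T) hf.2 n).IsPath := by
    rw [Walk.isPath_def, rayWalk_support]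
    exact List.Nodup.map hf.1 List.nodup_range
  have := path_len hconn hac _ hp
  rw [← this, rayWalk_length]

lemma ray_shift {f : ℕ → V} (hf : IsRay T f) (a : ℕ) : IsRay T (fun k => f (a + k)) :=
  ⟨fun i j hij => by
    have := hf.1 hij
    omega, fun n => by
    have := hf.2 (a + n)
    simpa [Nat.add_assoc] using this⟩

lemma ray_dist (hconn : T.Connected) (hac : T.IsAcyclic) {f : ℕ → V}
    (hf : IsRay T f) {a b : ℕ} (hab : a ≤ b) : T.dist (f a) (f b) = b - a := by
  have := ray_dist0 hconn hac (ray_shift hf a) (b - a)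
  simpa [Nat.add_sub_cancel' hab] using this

lemma ray_level (hconn : T.Connected) (hac : T.IsAcyclic) {f : ℕ → V}
    (hf : IsRay T f) (h0 : f 0 = o) (n : ℕ) : T.dist o (f n) = n := by
  rw [← h0]
  exact ray_dist0 hconn hac hf n

lemma ray_desc (hconn : T.Connected) (hac : T.IsAcyclic) {f : ℕ → V}
    (hf : IsRay T f) (h0 : f 0 = o) {a b : ℕ} (hab : a ≤ b) :
    f b ∈ Descendants T o (f a) := by
  rw [mem_desc, ray_level hconn hac hf h0, ray_level hconn hac hf h0,
    ray_dist hconn hac hf hab]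
  omega

lemma ray_prefix (hconn : T.Connected) (hac : T.IsAcyclic) {f g : ℕ → V}
    (hf : IsRay T f) (hf0 : f 0 = o) (hg : IsRay T g) (hg0 : g 0 = o)
    {n k : ℕ} (hfg : f n = g n) (hk : k ≤ n) : f k = g k := by
  have h1 : f n ∈ Descendants T o (f k) := ray_desc hconn hac hf hf0 hk
  have h2 : f n ∈ Descendants T o (g k) := by
    rw [hfg]; exact ray_desc hconn hac hg hg0 hk
  exact anc_unique hconn hac h1 h2
    (by rw [ray_level hconn hac hf hf0, ray_level hconn hac hg hg0])

lemma desc_infinite_child (hconn : T.Connected) (hac : T.IsAcyclic)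
    [∀ v, Fintype (T.neighborSet v)] {u : V} (h : (Descendants T o u).Infinite) :
    ∃ c, T.Adj u c ∧ T.dist o c = T.dist o u + 1 ∧ (Descendants T o c).Infinite := by
  by_contra hcon
  push_neg at hcon
  apply h
  have hsub : Descendants T o u ⊆ {u} ∪
      ⋃ c ∈ (T.neighborFinset u : Set V), {y ∈ Descendants T o c | ¬ (Descendants T o c).Infinite} := by
    intro v hv
    by_cases hvu : v = u
    · exact Or.inl hvu
    · obtain ⟨c, hadj, hlev, _, hvc⟩ := child_exists hconn hac hv hvu
      refine Or.inr ?_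
      exact Set.mem_biUnion (show c ∈ (T.neighborFinset u : Set V) by simpa using hadj)
        ⟨hvc, Set.not_infinite.2 (hcon c hadj hlev)⟩
  refine Set.Finite.subset ?_ hsub
  refine (Set.finite_singleton u).union ?_
  refine Set.Finite.biUnion (Finset.finite_toSet _) ?_
  intro c _
  by_cases hfin : (Descendants T o c).Infinite
  · convert Set.finite_empty using 1
    ext y
    simp [hfin]
  · exact Set.Finite.subset (Set.not_infinite.1 hfin) (fun y hy => hy.1)

lemma onRay_of_infinite (hconn : T.Connected) (hac : T.IsAcyclic)
    [∀ v, Fintype (T.neighborSet v)] {v : V} (h : (Descendants T o v).Infinite) :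
    ∃ f, (IsRay T f ∧ f 0 = o) ∧ f (T.dist o v) = v := by
  classical
  -- the descending chain
  let G := {u : V // (Descendants T o u).Infinite}
  have step : ∀ u : G, ∃ c : G, T.Adj u.1 c.1 ∧ T.dist o c.1 = T.dist o u.1 + 1 := by
    intro u
    obtain ⟨c, h1, h2, h3⟩ := desc_infinite_child hconn hac u.2
    exact ⟨⟨c, h3⟩, h1, h2⟩
  choose next hnext1 hnext2 using step
  let g : ℕ → G := fun n => next^[n] ⟨v, h⟩
  have hg0 : g 0 = ⟨v, h⟩ := rfl
  have hgsucc : ∀ n, g (n + 1) = next (g n) := fun n => Function.iterate_succ_apply' next n _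
  have hgadj : ∀ n, T.Adj (g n).1 (g (n + 1)).1 := by
    intro n; rw [hgsucc]; exact hnext1 (g n)
  have hglev : ∀ n, T.dist o (g n).1 = T.dist o v + n := by
    intro n
    induction n with
    | zero => simp [hg0]
    | succ n ih => rw [hgsucc, hnext2, ih]; omega
  -- the initial path
  obtain ⟨p, hp, hplen⟩ := hconn.exists_path_of_dist o v
  set n0 := T.dist o v with hn0
  -- the ray
  let f : ℕ → V := fun k => if k < n0 then p.getVert k else (g (k - n0)).1
  have hflev : ∀ k, T.dist o (f k) = k := by
    intro k
    by_cases hk : k < n0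
    · simp only [f, if_pos hk]
      exact (geodesic_getVert hconn p hplen (by omega)).1
    · simp only [f, if_neg hk]
      rw [hglev]; omega
  have hfv : f n0 = v := by
    simp only [f, if_neg (lt_irrefl n0)]
    rw [Nat.sub_self, hg0]
  have hfadj : ∀ k, T.Adj (f k) (f (k + 1)) := by
    intro k
    rcases lt_trichotomy (k + 1) n0 with hk | hk | hk
    · simp only [f, if_pos hk, if_pos (by omega : k < n0)]
      exact p.adj_getVert_succ (by omega)
    · simp only [f, if_pos (by omega : k < n0), if_neg (by omega : ¬ k + 1 < n0)]
      have heq : ((g (k + 1 - n0)).1 : V) = p.getVert (k + 1) := by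
        rw [show k + 1 - n0 = 0 by omega, hg0, hk, ← hplen]
        exact p.getVert_length.symm
      rw [heq]
      exact p.adj_getVert_succ (by omega)
    · simp only [f, if_neg (by omega : ¬ k < n0), if_neg (by omega : ¬ k + 1 < n0)]
      have : k + 1 - n0 = (k - n0) + 1 := by omega
      rw [this]
      exact hgadj _
  refine ⟨f, ⟨⟨fun i j hij => ?_, hfadj⟩, ?_⟩, hfv⟩
  · have hi := hflev i
    have hj := hflev j
    rw [hij] at hi
    omega
  · have h0 := hflev 0
    exact ((hconn o (f 0)).dist_eq_zero_iff.1 h0).symm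

lemma biUnion_bound {ι W : Type*} (s : Finset ι) (F : ι → Set W) (E : ℕ)
    (h : ∀ i ∈ s, (F i).Finite ∧ (F i).ncard ≤ E) :
    (⋃ i ∈ s, F i).Finite ∧ (⋃ i ∈ s, F i).ncard ≤ s.card * E := by
  classical
  induction s using Finset.induction_on with
  | empty => simp
  | @insert a s ha ih =>
    have hFa := h a (Finset.mem_insert_self a s)
    have hrest := ih (fun i hi => h i (Finset.mem_insert_of_mem hi))
    rw [Finset.set_biUnion_insert]
    refine ⟨hFa.1.union hrest.1, ?_⟩
    calc (F a ∪ ⋃ i ∈ s, F i).ncard ≤ (F a).ncard + (⋃ i ∈ s, F i).ncard :=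
          Set.ncard_union_le _ _
      _ ≤ E + s.card * E := add_le_add hFa.2 hrest.2
      _ = (insert a s).card * E := by rw [Finset.card_insert_of_notMem ha]; ring

end Stmt9Aux

set_option maxHeartbeats 2000000 in
/-- an infinite, locally finite, subperiodic rooted tree with finitely many
infinite rays from the root has linear growth. -/
theorem stmt9 {V : Type*} (T : SimpleGraph V) [∀ v, Fintype (T.neighborSet v)]
    (hconn : T.Connected) (hac : T.IsAcyclic) (hinf : Infinite V)
    (o : V) (hsub : Subperiodic T o)
    (hrays : {f : ℕ → V | IsRay T f ∧ f 0 = o}.Finite) :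
    ∃ c : ℕ, ∀ n : ℕ, {v : V | T.dist o v ≤ n}.Finite ∧
      {v : V | T.dist o v ≤ n}.ncard ≤ c * n + c := by
  classical
  obtain ⟨f0, hf0⟩ : ∃ f, IsRay T f ∧ f 0 = o := by
    have huniv : Descendants T o o = Set.univ := by
      ext y; simp [Descendants, SimpleGraph.dist_self]
    have hoinf : (Descendants T o o).Infinite := by
      rw [huniv]; exact Set.infinite_univ
    obtain ⟨f, hf, _⟩ := Stmt9Aux.onRay_of_infinite hconn hac hoinf
    exact ⟨f, hf⟩
  set S : Set (ℕ → V) := {f : ℕ → V | IsRay T f ∧ f 0 = o} with hS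
  set S' : Finset (ℕ → V) := hrays.toFinset with hS'
  have hmemS' : ∀ f, f ∈ S' ↔ (IsRay T f ∧ f 0 = o) := fun f => hrays.mem_toFinset
  -- divergence constant
  have hdiv : ∀ f g : ℕ → V, ∃ N, (IsRay T f ∧ f 0 = o) → (IsRay T g ∧ g 0 = o) → f ≠ g →
      ∀ n, N ≤ n → f n ≠ g n := by
    intro f g
    by_cases hfg : (IsRay T f ∧ f 0 = o) ∧ (IsRay T g ∧ g 0 = o) ∧ f ≠ g
    · obtain ⟨hf, hg, hne⟩ := hfg
      obtain ⟨n0, hn0⟩ := Function.ne_iff.1 hne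
      refine ⟨n0, fun _ _ _ n hn hc => hn0 ?_⟩
      exact Stmt9Aux.ray_prefix hconn hac hf.1 hf.2 hg.1 hg.2 hc hn
    · exact ⟨0, fun h1 h2 h3 => absurd ⟨h1, h2, h3⟩ hfg⟩
  choose Nd hNd using hdiv
  set K : ℕ := S'.sup fun f => S'.sup fun g => Nd f g with hK
  have hKprop : ∀ f g, (IsRay T f ∧ f 0 = o) → (IsRay T g ∧ g 0 = o) → f ≠ g →
      ∀ n, K ≤ n → f n ≠ g n := by
    intro f g hf hg hne n hn
    have h2 : (S'.sup fun g' => Nd f g') ≤ K :=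
      Finset.le_sup (f := fun f' => S'.sup fun g' => Nd f' g') ((hmemS' f).2 hf)
    have h1 : Nd f g ≤ S'.sup fun g' => Nd f g' :=
      Finset.le_sup (f := fun g' => Nd f g') ((hmemS' g).2 hg)
    exact hNd f g hf hg hne n (by omega)
  -- the bush sets
  set W : (ℕ → V) → ℕ → Set V := fun f t =>
    Descendants T o (f t) \ ⋃ g ∈ S, Descendants T o (g (t + 1)) with hW
  have hWfin : ∀ f, (IsRay T f ∧ f 0 = o) → ∀ t, (W f t).Finite := by
    intro f hf t
    have hsub : W f t ⊆ {f t} ∪ ⋃ c ∈ (T.neighborFinset (f t) : Set V),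
        {y ∈ Descendants T o c | ¬ (Descendants T o c).Infinite} := by
      intro v hv
      by_cases hvu : v = f t
      · exact Or.inl hvu
      · obtain ⟨c, hadj, hlev, hcd, hvc⟩ := Stmt9Aux.child_exists hconn hac hv.1 hvu
        refine Or.inr (Set.mem_biUnion
          (show c ∈ (T.neighborFinset (f t) : Set V) by simpa using hadj) ⟨hvc, ?_⟩)
        intro hinf2
        obtain ⟨g, hg, hgc⟩ := Stmt9Aux.onRay_of_infinite hconn hac hinf2
        have hlev' : T.dist o c = t + 1 := by
          rwa [Stmt9Aux.ray_level hconn hac hf.1 hf.2 t] at hlev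
        apply hv.2
        refine Set.mem_iUnion₂.2 ⟨g, hg, ?_⟩
        rw [hlev'] at hgc
        rw [← hgc] at hvc
        exact hvc
    refine Set.Finite.subset ?_ hsub
    refine (Set.finite_singleton _).union ?_
    refine Set.Finite.biUnion (Finset.finite_toSet _) ?_
    intro c _
    by_cases hfin : (Descendants T o c).Infinite
    · convert Set.finite_empty using 1
      ext y; simp [hfin]
    · exact Set.Finite.subset (Set.not_infinite.1 hfin) (fun y hy => hy.1)
  -- the uniform bound on the bush sets
  set E : ℕ := (S' ×ˢ Finset.range (K + 2)).sup fun p => (W p.1 p.2).ncard with hE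
  have hWboundlow : ∀ f, f ∈ S' → ∀ t, t ≤ K + 1 → (W f t).ncard ≤ E := by
    intro f hf t ht
    rw [hE]
    have hmem : (f, t) ∈ S' ×ˢ Finset.range (K + 2) :=
      Finset.mem_product.2 ⟨hf, Finset.mem_range.2 (by omega)⟩
    exact Finset.le_sup (f := fun p : (ℕ → V) × ℕ => (W p.1 p.2).ncard) (b := (f, t)) hmem
  have hWbound : ∀ f, (IsRay T f ∧ f 0 = o) → ∀ t, (W f t).ncard ≤ E := by
    intro f hf t
    by_cases ht : t ≤ K + 1
    · exact hWboundlow f ((hmemS' f).2 hf) t ht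
    · set s := K + 1 with hs
      set u := t - s with hu
      have hus : u + s = t := by omega
      obtain ⟨φ, hφ0, hφinj, hφhom⟩ := hsub (f u)
      have hfdesc : ∀ r, f (u + r) ∈ Descendants T o (f u) :=
        fun r => Stmt9Aux.ray_desc hconn hac hf.1 hf.2 (Nat.le_add_right u r)
      set g : ℕ → V := fun r => φ (f (u + r)) with hg
      have hglev : ∀ r, T.dist o (g r) = r := by
        intro r
        have h1 := Stmt9Aux.phi_dist hconn hac hφ0 hφinj hφhom (hfdesc r)
        have h2 := Stmt9Aux.ray_dist hconn hac hf.1 (Nat.le_add_right u r)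
        show T.dist o (φ (f (u + r))) = r
        omega
      have hgray : IsRay T g ∧ g 0 = o := by
        refine ⟨⟨fun i j hij => ?_, fun r => ?_⟩, ?_⟩
        · have hi := hglev i
          have hj := hglev j
          rw [hij] at hi
          omega
        · show T.Adj (φ (f (u + r))) (φ (f (u + (r + 1))))
          refine hφhom _ (hfdesc r) _ (hfdesc (r + 1)) ?_
          have := hf.1.2 (u + r)
          rwa [show u + r + 1 = u + (r + 1) from by omega] at this
        · show φ (f (u + 0)) = o
          rw [Nat.add_zero, hφ0]
      have hgsval : g s = φ (f t) := by rw [hg]; simp only []; rw [hus]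
      have hgs1val : g (s + 1) = φ (f (t + 1)) := by
        rw [hg]; simp only []; rw [show u + (s + 1) = t + 1 from by omega]
      have hftd : f t ∈ Descendants T o (f u) := by rw [← hus]; exact hfdesc s
      have hft1d : f (t + 1) ∈ Descendants T o (f u) := by
        rw [show t + 1 = u + (s + 1) from by omega]; exact hfdesc (s + 1)
      have hmaps : ∀ v ∈ W f t, φ v ∈ W g s := by
        intro v hv
        have hvft : v ∈ Descendants T o (f t) := hv.1
        have hvx : v ∈ Descendants T o (f u) := (Stmt9Aux.desc_trans hconn hftd hvft).1
        have h1 : φ v ∈ Descendants T o (g s) := by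
          have := Stmt9Aux.phi_desc hconn hac hφ0 hφinj hφhom hftd hvft
          rwa [← hgsval] at this
        refine ⟨h1, ?_⟩
        intro hmem
        obtain ⟨g'', hg''S, hφvmem⟩ := Set.mem_iUnion₂.1 hmem
        have hg''ray : IsRay T g'' ∧ g'' 0 = o := hg''S
        have hw1 : g'' (s + 1) ∈ Descendants T o (g s) :=
          Stmt9Aux.anc_compare hconn hac h1 hφvmem
            (by rw [hglev, Stmt9Aux.ray_level hconn hac hg''ray.1 hg''ray.2]; omega)
        have hw2 : g'' (s + 1) ∈ Descendants T o (g'' s) :=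
          Stmt9Aux.ray_desc hconn hac hg''ray.1 hg''ray.2 (by omega)
        have hgsg : g'' s = g s := Stmt9Aux.anc_unique hconn hac hw2 hw1
          (by rw [hglev, Stmt9Aux.ray_level hconn hac hg''ray.1 hg''ray.2])
        have hg''g : g'' = g := by
          by_contra hne
          exact hKprop g'' g hg''ray hgray hne s (by omega) hgsg
        rw [hg''g] at hφvmem
        by_cases hvft' : v = f t
        · rw [hvft', ← hgsval] at hφvmem
          rw [Stmt9Aux.mem_desc, hglev, hglev] at hφvmem
          omega
        · obtain ⟨c, hadj, hlevc, hcd, hvc⟩ := Stmt9Aux.child_exists hconn hac hvft hvft'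
          have hcne : c ≠ f (t + 1) := by
            intro hceq
            rw [hceq] at hvc
            exact hv.2 (Set.mem_iUnion₂.2 ⟨f, hf, hvc⟩)
          have hcx : c ∈ Descendants T o (f u) := (Stmt9Aux.desc_trans hconn hftd hcd).1
          have hφvc : φ v ∈ Descendants T o (φ c) :=
            Stmt9Aux.phi_desc hconn hac hφ0 hφinj hφhom hcx hvc
          have hφclev : T.dist o (φ c) = s + 1 := by
            have h3 := Stmt9Aux.phi_dist hconn hac hφ0 hφinj hφhom hcx
            rw [Stmt9Aux.mem_desc] at hcx
            rw [Stmt9Aux.ray_level hconn hac hf.1 hf.2 t] at hlevc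
            have h4 := Stmt9Aux.ray_level hconn hac hf.1 hf.2 u
            omega
          have hanc : φ c = g (s + 1) := Stmt9Aux.anc_unique hconn hac hφvc hφvmem
            (by rw [hφclev, hglev])
          have : c = f (t + 1) := hφinj hcx hft1d (by rw [hanc, hgs1val])
          exact hcne this
      have hinjW : Set.InjOn φ (W f t) := by
        intro a ha b hb hab
        exact hφinj ((Stmt9Aux.desc_trans hconn hftd ha.1).1)
          ((Stmt9Aux.desc_trans hconn hftd hb.1).1) hab
      have himg : φ '' (W f t) ⊆ W g s := by
        rintro _ ⟨v, hv, rfl⟩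
        exact hmaps v hv
      have hWgfin := hWfin g hgray s
      calc (W f t).ncard = (φ '' (W f t)).ncard := (Set.ncard_image_of_injOn hinjW).symm
        _ ≤ (W g s).ncard := Set.ncard_le_ncard himg hWgfin
        _ ≤ E := hWboundlow g ((hmemS' g).2 hgray) s (by omega)
  -- assemble
  refine ⟨S'.card * E, fun n => ?_⟩
  have hcover : {v : V | T.dist o v ≤ n} ⊆
      ⋃ p ∈ (S' ×ˢ Finset.range (n + 1) : Finset _), W p.1 p.2 := by
    intro v hv
    simp only [Set.mem_setOf_eq] at hv
    set P0 : ℕ → Prop := fun t => ∃ f, (IsRay T f ∧ f 0 = o) ∧ v ∈ Descendants T o (f t)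
      with hP0
    have hP00 : P0 0 := by
      refine ⟨f0, hf0, ?_⟩
      rw [hf0.2, Stmt9Aux.mem_desc, SimpleGraph.dist_self]
      omega
    have hP0le : ∀ t, P0 t → t ≤ T.dist o v := by
      rintro t ⟨f, hf, hm⟩
      rw [Stmt9Aux.mem_desc, Stmt9Aux.ray_level hconn hac hf.1 hf.2] at hm
      omega
    set t0 := Nat.findGreatest P0 (T.dist o v) with ht0
    have hP0t0 : P0 t0 := Nat.findGreatest_spec (Nat.zero_le _) hP00
    obtain ⟨f, hf, hm⟩ := hP0t0
    have ht0le : t0 ≤ n := le_trans (Nat.findGreatest_le _) hv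
    have hvW : v ∈ W f t0 := by
      refine ⟨hm, ?_⟩
      intro hmem
      obtain ⟨g, hgS, hgm⟩ := Set.mem_iUnion₂.1 hmem
      have h1 : t0 + 1 ≤ T.dist o v := hP0le (t0 + 1) ⟨g, hgS, hgm⟩
      exact Nat.findGreatest_is_greatest (lt_add_one t0) h1 ⟨g, hgS, hgm⟩
    exact Set.mem_iUnion₂.2
      ⟨(f, t0), Finset.mem_product.2 ⟨(hmemS' f).2 hf, Finset.mem_range.2 (by omega)⟩, hvW⟩
  obtain ⟨hfinU, hcardU⟩ := Stmt9Aux.biUnion_bound (S' ×ˢ Finset.range (n + 1))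
    (fun p => W p.1 p.2) E
    (fun p hp => ⟨hWfin p.1 ((hmemS' p.1).1 (Finset.mem_product.1 hp).1) p.2,
      hWbound p.1 ((hmemS' p.1).1 (Finset.mem_product.1 hp).1) p.2⟩)
  have hcards : (S' ×ˢ Finset.range (n + 1)).card * E = S'.card * E * n + S'.card * E := by
    rw [Finset.card_product, Finset.card_range]
    ring
  refine ⟨hfinU.subset hcover, ?_⟩
  calc {v : V | T.dist o v ≤ n}.ncard
      ≤ (⋃ p ∈ (S' ×ˢ Finset.range (n + 1) : Finset _), W p.1 p.2).ncard :=
        Set.ncard_le_ncard hcover hfinU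
    _ ≤ (S' ×ˢ Finset.range (n + 1)).card * E := hcardU
    _ = S'.card * E * n + S'.card * E := hcards
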